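/- For words v, w over Σ with lengths divisible by d, the ⊑_d-downward closure of v* is contained in the ⊑_d-downward closure of w* if and only if κ_d(v)(i) ⊆ κ_d(w)(i) for every i ∈ {1,…,d}. -/

import Mathlib

/-- `kappa d w i` is the set of letters occurring in `w` at (1-based) positions
congruent to `i` modulo `d`. -/
def kappa {A : Type*} (d : ℕ) (w : List A) (i : ℕ) : Set A :=
  {a | ∃ p : ℕ, w[p]? = some a ∧ (p + 1) % d = i % d}

/-- `ModEmb d u v` : `u` embeds into `v` by a strictly monotone, letter-preserving
map that preserves positions modulo `d`, and `|u| ≡ |v| (mod d)`. -/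
def ModEmb {A : Type*} (d : ℕ) (u v : List A) : Prop :=
  u.length % d = v.length % d ∧
    ∃ α : Fin u.length → Fin v.length, StrictMono α ∧
      (∀ i, u.get i = v.get (α i)) ∧
      (∀ i : Fin u.length, ((α i : ℕ)) % d = ((i : ℕ)) % d)

/-- Downward closure of a set of words with respect to `ModEmb d`. -/
def dclMod {A : Type*} (d : ℕ) (S : Set (List A)) : Set (List A) :=
  {u | ∃ v ∈ S, ModEmb d u v}

/-- The `k`-th power of a word. -/
def wpow {A : Type*} (v : List A) (k : ℕ) : List A :=
  (List.replicate k v).flatten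

/-- `π_d(v)`: the smallest `t ≥ 1` dividing `d` such that
`κ_d(v)(i + t) = κ_d(v)(i)` for all `i ∈ [1, d - t]`. -/
noncomputable def piD {A : Type*} (d : ℕ) (v : List A) : ℕ :=
  sInf {t | t ∣ d ∧ 1 ≤ t ∧ ∀ i : ℕ, 1 ≤ i → i + t ≤ d →
    kappa d v (i + t) = kappa d v i}

lemma wpow_succ {A : Type*} (v : List A) (k : ℕ) : wpow v (k+1) = v ++ wpow v k := by
  simp [wpow, List.replicate_succ]

lemma wpow_one {A : Type*} (v : List A) : wpow v 1 = v := by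
  simp [wpow]

lemma wpow_length {A : Type*} (v : List A) (k : ℕ) : (wpow v k).length = k * v.length := by
  induction k with
  | zero => simp [wpow]
  | succ k ih => rw [wpow_succ]; simp [ih]; ring

lemma wpow_get? {A : Type*} (w : List A) (k p : ℕ) (hp : p < k * w.length) :
    (wpow w k)[p]? = w[p % w.length]? := by
  induction k generalizing p with
  | zero => omega
  | succ k ih =>
    rw [wpow_succ]
    by_cases h : p < w.length
    · rw [List.getElem?_append_left h, Nat.mod_eq_of_lt h]
    · push_neg at h
      have hs : (k+1) * w.length = k * w.length + w.length := by ring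
      rw [List.getElem?_append_right h, ih (p - w.length) (by omega), Nat.mod_eq_sub_mod h]

lemma kappa_congr {A : Type*} (d : ℕ) (w : List A) {i j : ℕ} (h : i % d = j % d) :
    kappa d w i = kappa d w j := by
  unfold kappa; rw [h]

lemma modEmb_refl {A : Type*} (d : ℕ) (v : List A) : ModEmb d v v :=
  ⟨rfl, id, strictMono_id, fun _ => rfl, fun _ => rfl⟩

lemma modEmb_trans {A : Type*} (d : ℕ) {u v w : List A} (h1 : ModEmb d u v)
    (h2 : ModEmb d v w) : ModEmb d u w := by
  obtain ⟨hl1, α, hα, hg1, hm1⟩ := h1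
  obtain ⟨hl2, β, hβ, hg2, hm2⟩ := h2
  exact ⟨hl1.trans hl2, β ∘ α, hβ.comp hα, fun i => (hg1 i).trans (hg2 (α i)),
    fun i => (hm2 (α i)).trans (hm1 i)⟩

lemma kappa_mono {A : Type*} (d : ℕ) {u v : List A} (h : ModEmb d u v) (i : ℕ) :
    kappa d u i ⊆ kappa d v i := by
  rintro a ⟨p, hp, he⟩
  obtain ⟨-, α, _, hget, hmod⟩ := h
  obtain ⟨hplt, hpa⟩ := List.getElem?_eq_some_iff.mp hp
  refine ⟨(α ⟨p, hplt⟩ : ℕ), ?_, ?_⟩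
  · rw [List.getElem?_eq_getElem (α ⟨p, hplt⟩).isLt]
    have := hget ⟨p, hplt⟩
    simp only [List.get_eq_getElem] at this
    rw [← this, hpa]
  · have h1 : ((α ⟨p, hplt⟩ : ℕ) + 1) % d = (p + 1) % d :=
      Nat.ModEq.add_right 1 (hmod ⟨p, hplt⟩)
    rw [h1, he]

lemma kappa_wpow_subset {A : Type*} (d : ℕ) (w : List A) (hw : d ∣ w.length) (k i : ℕ) :
    kappa d (wpow w k) i ⊆ kappa d w i := by
  rintro a ⟨p, hp, he⟩
  obtain ⟨hlt, -⟩ := List.getElem?_eq_some_iff.mp hp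
  rw [wpow_length] at hlt
  rw [wpow_get? w k p hlt] at hp
  refine ⟨p % w.length, hp, ?_⟩
  have h1 : p % w.length % d = p % d := Nat.mod_mod_of_dvd p hw
  calc (p % w.length + 1) % d = (p + 1) % d := Nat.ModEq.add_right 1 h1
    _ = i % d := he

lemma modEmb_wpow {A : Type*} (d : ℕ) (hd : 1 ≤ d) {v w : List A}
    (hv : d ∣ v.length) (hw : d ∣ w.length)
    (h : ∀ i ∈ Finset.Icc 1 d, kappa d v i ⊆ kappa d w i) (k : ℕ) :
    ModEmb d (wpow v k) (wpow w (k * v.length)) := by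
  have h' : ∀ i : ℕ, kappa d v i ⊆ kappa d w i := by
    intro i
    by_cases h0 : i % d = 0
    · rw [kappa_congr d v (j := d) (by rw [Nat.mod_self, h0]),
        kappa_congr d w (j := d) (by rw [Nat.mod_self, h0])]
      exact h d (Finset.mem_Icc.mpr ⟨hd, le_refl d⟩)
    · rw [kappa_congr d v (j := i % d) (Nat.mod_mod_of_dvd i (dvd_refl d)).symm,
        kappa_congr d w (j := i % d) (Nat.mod_mod_of_dvd i (dvd_refl d)).symm]
      exact h (i % d) (Finset.mem_Icc.mpr ⟨by omega, (Nat.mod_lt _ hd).le⟩)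
  have key : ∀ i : Fin (wpow v k).length, ∃ q : ℕ,
      w[q]? = some ((wpow v k).get i) ∧ (q + 1) % d = ((i : ℕ) + 1) % d ∧ q < w.length := by
    intro i
    have hplt : (i : ℕ) < k * v.length := by rw [← wpow_length v]; exact i.isLt
    have hget : (wpow v k)[(i : ℕ)]? = some ((wpow v k).get i) := List.getElem?_eq_getElem i.isLt
    rw [wpow_get? v k (i : ℕ) hplt] at hget
    have ha : (wpow v k).get i ∈ kappa d v ((i : ℕ) % v.length + 1) :=
      ⟨(i : ℕ) % v.length, hget, rfl⟩
    obtain ⟨q, hq, hqe⟩ := h' _ ha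
    obtain ⟨hqlt, -⟩ := List.getElem?_eq_some_iff.mp hq
    refine ⟨q, hq, ?_, hqlt⟩
    have hm : (i : ℕ) % v.length % d = (i : ℕ) % d := Nat.mod_mod_of_dvd _ hv
    calc (q + 1) % d = ((i : ℕ) % v.length + 1) % d := hqe
      _ = ((i : ℕ) + 1) % d := Nat.ModEq.add_right 1 hm
  choose q hq hqe hqlt using key
  have hbound : ∀ i : Fin (wpow v k).length,
      (i : ℕ) * w.length + q i < (wpow w (k * v.length)).length := by
    intro i
    rw [wpow_length w]
    have h1 : (i : ℕ) < k * v.length := by rw [← wpow_length v]; exact i.isLt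
    have h2 : ((i : ℕ) + 1) * w.length ≤ (k * v.length) * w.length :=
      Nat.mul_le_mul h1 (le_refl w.length)
    have h3 : ((i : ℕ) + 1) * w.length = (i : ℕ) * w.length + w.length := by ring
    have := hqlt i
    omega
  refine ⟨?_, fun i => ⟨(i : ℕ) * w.length + q i, hbound i⟩, ?_, ?_, ?_⟩
  · rw [wpow_length v, wpow_length w]
    have e1 : k * v.length % d = 0 := by simpa [Nat.ModEq] using Nat.modEq_zero_iff_dvd.mpr (hv.mul_left k)
    have e2 : k * v.length * w.length % d = 0 :=
      by simpa [Nat.ModEq] using Nat.modEq_zero_iff_dvd.mpr ((hv.mul_left k).mul_right w.length)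
    rw [e1, e2]
  · intro i j hij
    have hij' : (i : ℕ) < (j : ℕ) := hij
    have h2 : ((i : ℕ) + 1) * w.length ≤ (j : ℕ) * w.length :=
      Nat.mul_le_mul hij' (le_refl w.length)
    have h3 : ((i : ℕ) + 1) * w.length = (i : ℕ) * w.length + w.length := by ring
    have := hqlt i
    exact Fin.mk_lt_mk.mpr (by omega)
  · intro i
    have hlt := hbound i
    rw [wpow_length w] at hlt
    have hg : (wpow w (k * v.length))[(i : ℕ) * w.length + q i]? =
        w[((i : ℕ) * w.length + q i) % w.length]? := wpow_get? w _ _ hlt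
    have e : ((i : ℕ) * w.length + q i) % w.length = q i := by
      rw [Nat.add_comm, Nat.add_mul_mod_self_right, Nat.mod_eq_of_lt (hqlt i)]
    rw [e, hq i] at hg
    have hg2 := List.getElem?_eq_getElem (hbound i)
    rw [hg] at hg2
    exact Option.some.inj hg2
  · intro i
    show ((i : ℕ) * w.length + q i) % d = (i : ℕ) % d
    obtain ⟨c, hc⟩ := hw
    have e : (i : ℕ) * w.length + q i = q i + ((i : ℕ) * c) * d := by rw [hc]; ring
    rw [e, Nat.add_mul_mod_self_right]
    exact Nat.ModEq.add_right_cancel' 1 (hqe i)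

theorem dcl_star_inclusion {A : Type*} (d : ℕ) (hd : 1 ≤ d) (v w : List A)
    (hv : d ∣ v.length) (hw : d ∣ w.length) :
    dclMod d {u | ∃ k : ℕ, u = wpow v k} ⊆
        dclMod d {u | ∃ k : ℕ, u = wpow w k} ↔
      ∀ i ∈ Finset.Icc 1 d, kappa d v i ⊆ kappa d w i := by
  constructor
  · intro hsub i _ a ha
    have hv1 : v ∈ dclMod d {u | ∃ k : ℕ, u = wpow v k} :=
      ⟨wpow v 1, ⟨1, rfl⟩, by rw [wpow_one]; exact modEmb_refl d v⟩
    obtain ⟨x, ⟨k, rfl⟩, hemb⟩ := hsub hv1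
    exact kappa_wpow_subset d w hw k i (kappa_mono d hemb i ha)
  · rintro h u ⟨x, ⟨k, rfl⟩, hemb⟩
    exact ⟨wpow w (k * v.length), ⟨k * v.length, rfl⟩,
      modEmb_trans d hemb (modEmb_wpow d hd hv hw h k)⟩
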